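/- For all t > 0, the derivatives of τ(t) = -log(t + e^{-t} - 1) and ρ(t) = τ(t) + log(1 - e^{-t}) satisfy τ'(t) ≤ ρ'(t) ≤ (1/2)τ'(t) < 0. -/

import Mathlib

open Real

lemma inner_hasDerivAt (t : ℝ) :
    HasDerivAt (fun s : ℝ => s + Real.exp (-s) - 1) (1 - Real.exp (-t)) t := by
  have h0 : HasDerivAt (fun s : ℝ => Real.exp (-s)) (Real.exp (-t) * (-1)) t :=
    (Real.hasDerivAt_exp (-t)).comp t (hasDerivAt_neg t)
  have := ((hasDerivAt_id t).add h0).sub_const 1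
  simpa [sub_eq_add_neg, mul_comm] using this

/-- For all t > 0, the derivatives of τ(t) = -log(t + e^{-t} - 1) and
ρ(t) = τ(t) + log(1 - e^{-t}) satisfy τ'(t) ≤ ρ'(t) ≤ (1/2)τ'(t) < 0. -/
theorem tau_rho_deriv_ineq
    (τ ρ : ℝ → ℝ)
    (hτ : ∀ t, τ t = -Real.log (t + Real.exp (-t) - 1))
    (hρ : ∀ t, ρ t = τ t + Real.log (1 - Real.exp (-t))) :
    ∀ t > (0 : ℝ),
      deriv τ t ≤ deriv ρ t ∧ deriv ρ t ≤ (1 / 2) * deriv τ t ∧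
        (1 / 2) * deriv τ t < 0 := by
  intro t ht
  set u := Real.exp (-t) with hu
  have hupos : 0 < u := Real.exp_pos _
  have hu1 : u < 1 := by
    rw [hu, Real.exp_lt_one_iff]; linarith
  have hf : 0 < t + u - 1 := by
    have := Real.add_one_lt_exp (x := -t) (by linarith)
    rw [← hu] at this; linarith
  set f := t + u - 1 with hfdef
  -- derivative of τ
  have hτfun : τ = fun s => -Real.log (s + Real.exp (-s) - 1) := funext hτ
  have hτd : HasDerivAt τ (-((1 - u) / f)) t := by
    rw [hτfun]
    have := ((inner_hasDerivAt t).log hf.ne').neg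
    simpa [hu, hfdef, Pi.neg_def] using this
  -- derivative of ρ
  have hρfun : ρ = fun s => τ s + Real.log (1 - Real.exp (-s)) := funext hρ
  have h2 : HasDerivAt (fun s : ℝ => 1 - Real.exp (-s)) u t := by
    have h0 : HasDerivAt (fun s : ℝ => Real.exp (-s)) (Real.exp (-t) * (-1)) t :=
      (Real.hasDerivAt_exp (-t)).comp t (hasDerivAt_neg t)
    simpa [hu, Pi.sub_def] using (hasDerivAt_const t (1:ℝ)).sub h0
  have hρd : HasDerivAt ρ (-((1 - u) / f) + u / (1 - u)) t := by
    rw [hρfun]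
    exact hτd.add (h2.log (by linarith))
  rw [hτd.deriv, hρd.deriv]
  -- key inequality: 2*t*u + u^2 < 1
  have hsinh : t < Real.sinh t := Real.self_lt_sinh_iff.mpr ht
  have hmul : Real.exp t * u = 1 := by
    rw [hu, ← Real.exp_add]; simp
  have hkey : 2 * t * u + u ^ 2 < 1 := by
    rw [Real.sinh_eq] at hsinh
    nlinarith [Real.exp_pos t]
  have hdiv : 0 ≤ u / (1 - u) := div_nonneg hupos.le (by linarith)
  have ha : u / (1 - u) ≤ (1 - u) / (2 * f) := by
    rw [div_le_div_iff₀ (by linarith) (by positivity)]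
    nlinarith
  have hb : (1 / 2 : ℝ) * -((1 - u) / f) = -((1 - u) / f) + (1 - u) / (2 * f) := by
    field_simp
    ring
  have hc : 0 < (1 - u) / f := div_pos (by linarith) hf
  exact ⟨by linarith, by linarith, by linarith⟩
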